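/- For every real number q with 0<q<1, every integer n≥1 and every λ∈ℂ with |λ|=1, the Σ_q-family π_λ on ℓ²(ℕⁿ) is irreducible: the only closed subspaces of ℓ²(ℕⁿ) invariant under all the operators π_λ(Y_i) and their adjoints π_λ(Y_i)* (1≤i≤n+1) are {0} and ℓ²(ℕⁿ). -/

import Mathlib

open ContinuousLinearMap

noncomputable section

abbrev lpH (n : ℕ) : Type := lp (fun _ : Fin n → ℕ => ℂ) 2

def basisE {n : ℕ} (k : Fin n → ℕ) : lpH n := lp.single 2 k 1

/-- A `Σ_q`-family: relations (R1)-(R5). Index `i : Fin (n+1)` corresponds to `Y_{i+1}`. -/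
def IsSigmaQFamily (q : ℝ) {n : ℕ} {H : Type*} [NormedAddCommGroup H]
    [InnerProductSpace ℂ H] [CompleteSpace H]
    (Y : Fin (n + 1) → H →L[ℂ] H) : Prop :=
  (∀ i j : Fin (n + 1), j < i → ¬((i : ℕ) = n ∧ (j : ℕ) + 1 = n) →
      Y i * Y j = ((q : ℂ))⁻¹ • (Y j * Y i) ∧
      adjoint (Y i) * Y j = ((q : ℂ))⁻¹ • (Y j * adjoint (Y i))) ∧
  (∀ j : Fin (n + 1), (j : ℕ) + 1 = n →
      Y (Fin.last n) * Y j = (((q : ℂ))⁻¹ ^ 2) • (Y j * Y (Fin.last n)) ∧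
      adjoint (Y (Fin.last n)) * Y j = (((q : ℂ))⁻¹ ^ 2) • (Y j * adjoint (Y (Fin.last n)))) ∧
  (∀ i : Fin (n + 1), (i : ℕ) + 1 ≠ n →
      Y i * adjoint (Y i) - adjoint (Y i) * Y i
        = ((1 - q ^ 2 : ℝ) : ℂ) • ∑ k ∈ Finset.Ioi i, adjoint (Y k) * Y k) ∧
  (∀ i : Fin (n + 1), (i : ℕ) + 1 = n →
      Y i * adjoint (Y i) - adjoint (Y i) * Y i
        = ((1 - q ^ 4 : ℝ) : ℂ) • (adjoint (Y (Fin.last n)) * Y (Fin.last n))) ∧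
  (∑ i, adjoint (Y i) * Y i = 1)

/-- The representation `π_λ` on `ℓ²(ℕⁿ)`, described by its action on the canonical
orthonormal basis. Index `i : Fin n` (via `castSucc`) corresponds to `Y_{i+1}`,
and `Fin.last n` corresponds to `Y_{n+1}`. -/
def IsPiRep (q : ℝ) {n : ℕ} (lam : ℂ) (Y : Fin (n + 1) → lpH n →L[ℂ] lpH n) : Prop :=
  (∀ i : Fin n, (i : ℕ) + 1 < n → ∀ k : Fin n → ℕ,
      Y i.castSucc (basisE k)
        = ((q ^ (∑ j ∈ Finset.Iio i, k j) * Real.sqrt (1 - q ^ (2 * k i)) : ℝ) : ℂ)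
            • basisE (Function.update k i (k i - 1))) ∧
  (∀ i : Fin n, (i : ℕ) + 1 = n → ∀ k : Fin n → ℕ,
      Y i.castSucc (basisE k)
        = ((q ^ (∑ j ∈ Finset.Iio i, k j) * Real.sqrt (1 - q ^ (4 * k i)) : ℝ) : ℂ)
            • basisE (Function.update k i (k i - 1))) ∧
  (∀ k : Fin n → ℕ,
      Y (Fin.last n) (basisE k)
        = (lam * (q : ℂ) ^ (∑ j : Fin n, if (j : ℕ) + 1 = n then 2 * k j else k j))
            • basisE k)

/-- Irreducibility: the only closed invariant subspaces are `⊥` and `⊤`. -/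
def IsIrreducibleFamily {n : ℕ} {H : Type*} [NormedAddCommGroup H]
    [InnerProductSpace ℂ H] [CompleteSpace H]
    (Y : Fin (n + 1) → H →L[ℂ] H) : Prop :=
  ∀ V : Submodule ℂ H, IsClosed (V : Set H) →
    (∀ i : Fin (n + 1), ∀ v ∈ V, Y i v ∈ V ∧ adjoint (Y i) v ∈ V) →
    V = ⊥ ∨ V = ⊤

lemma basisE_apply {n : ℕ} (k m : Fin n → ℕ) :
    (basisE k : lpH n) m = if m = k then 1 else 0 := by
  by_cases h : m = k
  · subst h; simp [basisE, lp.single_apply_self]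
  · simp [basisE, lp.single_apply_ne _ _ _ h, h]

lemma inner_basisE {n : ℕ} (k : Fin n → ℕ) (f : lpH n) :
    (inner ℂ (basisE k) f : ℂ) = f k := by
  classical
  rw [basisE, lp.inner_single_left]
  simp [RCLike.inner_apply]

lemma lpH_ext {n : ℕ} {f g : lpH n} (h : ∀ k, f k = g k) : f = g :=
  lp.ext (funext h)

lemma adjoint_apply_basisE {n : ℕ} (Y : lpH n →L[ℂ] lpH n) (k m : Fin n → ℕ) :
    (adjoint Y (basisE k)) m = starRingEnd ℂ ((Y (basisE m)) k) := by
  rw [← inner_basisE m, adjoint_inner_right, ← inner_conj_symm, inner_basisE]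

lemma comp_apply_of_adjoint {n : ℕ} (Y : lpH n →L[ℂ] lpH n) (d : (Fin n → ℕ) → ℂ)
    (τ : (Fin n → ℕ) → (Fin n → ℕ))
    (h : ∀ k, adjoint Y (basisE k) = d k • basisE (τ k)) (v : lpH n) (k : Fin n → ℕ) :
    (Y v) k = starRingEnd ℂ (d k) * v (τ k) := by
  rw [← inner_basisE k, ← adjoint_inner_left, h, inner_smul_left, inner_basisE]

lemma adj_diag {n : ℕ} (Y : lpH n →L[ℂ] lpH n) (c : (Fin n → ℕ) → ℂ)
    (h : ∀ m, Y (basisE m) = c m • basisE m) (k : Fin n → ℕ) :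
    adjoint Y (basisE k) = starRingEnd ℂ (c k) • basisE k := by
  apply lpH_ext; intro m
  rw [adjoint_apply_basisE, h m]
  have : ((c m • basisE m : lpH n)) k = c m * (basisE m : lpH n) k := by
    rw [lp.coeFn_smul]; rfl
  rw [this, basisE_apply]
  have h2 : ((starRingEnd ℂ (c k) • basisE k : lpH n)) m
      = starRingEnd ℂ (c k) * (basisE k : lpH n) m := by
    rw [lp.coeFn_smul]; rfl
  rw [h2, basisE_apply]
  by_cases hmk : m = k
  · subst hmk; simp
  · simp only [if_neg hmk, mul_zero]
    rw [if_neg (fun h => hmk h.symm), mul_zero, map_zero]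

lemma diag_comp {n : ℕ} (Y : lpH n →L[ℂ] lpH n) (c : (Fin n → ℕ) → ℂ)
    (h : ∀ m, Y (basisE m) = c m • basisE m) (v : lpH n) (k : Fin n → ℕ) :
    (Y v) k = c k * v k := by
  have := comp_apply_of_adjoint Y (fun k => starRingEnd ℂ (c k)) id
    (fun k => adj_diag Y c h k) v k
  simpa using this

lemma adj_lower {n : ℕ} (Y : lpH n →L[ℂ] lpH n) (i : Fin n) (c : (Fin n → ℕ) → ℝ)
    (h : ∀ m, Y (basisE m) = ((c m : ℝ) : ℂ) • basisE (Function.update m i (m i - 1)))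
    (hc0 : ∀ m, m i = 0 → c m = 0) (k : Fin n → ℕ) :
    adjoint Y (basisE k)
      = ((c (Function.update k i (k i + 1)) : ℝ) : ℂ)
          • basisE (Function.update k i (k i + 1)) := by
  classical
  set k' := Function.update k i (k i + 1) with hk'
  have hk'i : k' i = k i + 1 := by rw [hk', Function.update_self]
  have hk'j : ∀ j, j ≠ i → k' j = k j := fun j hj => by rw [hk', Function.update_of_ne hj]
  apply lpH_ext; intro m
  rw [adjoint_apply_basisE, h m]
  have hL : ((((c m : ℝ) : ℂ) • basisE (Function.update m i (m i - 1)) : lpH n)) k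
      = ((c m : ℝ) : ℂ) * (basisE (Function.update m i (m i - 1)) : lpH n) k := by
    rw [lp.coeFn_smul]; rfl
  have hR : ((((c k' : ℝ) : ℂ) • basisE k' : lpH n)) m
      = ((c k' : ℝ) : ℂ) * (basisE k' : lpH n) m := by
    rw [lp.coeFn_smul]; rfl
  rw [hL, hR, basisE_apply, basisE_apply]
  by_cases hm : m = k'
  · subst hm
    have hupd : Function.update k' i (k' i - 1) = k := by
      funext j
      by_cases hj : j = i
      · subst hj
        rw [Function.update_self, hk'i]
        omega
      · rw [Function.update_of_ne hj, hk'j j hj]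
    rw [hupd, if_pos rfl, if_pos rfl]
    simp [Complex.conj_ofReal]
  · rw [if_neg hm, mul_zero]
    by_cases hk : k = Function.update m i (m i - 1)
    · have hmi : m i = 0 := by
        by_contra hmi
        have hki : k i = m i - 1 := by rw [hk, Function.update_self]
        apply hm
        funext j
        by_cases hj : j = i
        · rw [hj, hk'i]; omega
        · rw [hk'j j hj, hk, Function.update_of_ne hj]
      rw [if_pos hk, hc0 m hmi]
      simp
    · rw [if_neg hk, mul_zero, map_zero]
lemma lower_comp {n : ℕ} (Y : lpH n →L[ℂ] lpH n) (i : Fin n) (c : (Fin n → ℕ) → ℝ)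
    (h : ∀ m, Y (basisE m) = ((c m : ℝ) : ℂ) • basisE (Function.update m i (m i - 1)))
    (hc0 : ∀ m, m i = 0 → c m = 0) (v : lpH n) (k : Fin n → ℕ) :
    (Y v) k = ((c (Function.update k i (k i + 1)) : ℝ) : ℂ)
        * v (Function.update k i (k i + 1)) := by
  have := comp_apply_of_adjoint Y
    (fun k => ((c (Function.update k i (k i + 1)) : ℝ) : ℂ))
    (fun k => Function.update k i (k i + 1))
    (fun k => adj_lower Y i c h hc0 k) v k
  simpa [Complex.conj_ofReal] using this

lemma lpH_norm_le {n : ℕ} (f g : lpH n) (h : ∀ k, ‖f k‖ ≤ ‖g k‖) : ‖f‖ ≤ ‖g‖ := by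
  have hp : (0:ℝ) < (2 : ENNReal).toReal := by norm_num
  have hf := lp.norm_rpow_eq_tsum hp f
  have hg := lp.norm_rpow_eq_tsum hp g
  have hsum : (∑' k, ‖f k‖ ^ (2 : ENNReal).toReal) ≤ ∑' k, ‖g k‖ ^ (2 : ENNReal).toReal := by
    refine Summable.tsum_le_tsum (fun k => ?_) ((lp.memℓp f).summable hp) ((lp.memℓp g).summable hp)
    exact Real.rpow_le_rpow (norm_nonneg _) (h k) (le_of_lt hp)
  rw [← hf, ← hg] at hsum
  have h2 : (2 : ENNReal).toReal = ((2:ℕ):ℝ) := by norm_num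
  rw [h2, Real.rpow_natCast, Real.rpow_natCast] at hsum
  exact le_of_pow_le_pow_left₀ (by norm_num) (norm_nonneg g) hsum

lemma sum_update_sub {n : ℕ} (k : Fin n → ℕ) (i : Fin n) (hi : k i ≠ 0) :
    (∑ j, Function.update k i (k i - 1) j) + 1 = ∑ j, k j := by
  classical
  rw [Finset.sum_update_of_mem (Finset.mem_univ i)]
  have h1 := Finset.sum_eq_sum_sdiff_singleton_add (Finset.mem_univ i) k
  omega

lemma update_update_cancel {n : ℕ} (k : Fin n → ℕ) (i : Fin n) (hi : k i ≠ 0) :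
    Function.update (Function.update k i (k i - 1)) i
      (Function.update k i (k i - 1) i + 1) = k := by
  funext j
  by_cases hj : j = i
  · subst hj
    rw [Function.update_self, Function.update_self]
    omega
  · rw [Function.update_of_ne hj, Function.update_of_ne hj]


/-- The representation `π_λ` is irreducible. -/
theorem piRep_irreducible (q : ℝ) (hq0 : 0 < q) (hq1 : q < 1) (n : ℕ) (hn : 1 ≤ n)
    (lam : ℂ) (hlam : ‖lam‖ = 1) (Y : Fin (n + 1) → lpH n →L[ℂ] lpH n)
    (hY : IsPiRep q lam Y) :
    IsIrreducibleFamily Y := by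
  classical
  intro V hVcl hVinv
  by_cases hbot : V = ⊥
  · exact Or.inl hbot
  right
  have hlam0 : lam ≠ 0 := fun h => by simp [h] at hlam
  -- uniform description of the lowering operators
  set C : Fin n → (Fin n → ℕ) → ℝ := fun i k =>
    q ^ (∑ j ∈ Finset.Iio i, k j)
      * Real.sqrt (1 - q ^ ((if (i : ℕ) + 1 = n then 4 else 2) * k i)) with hC
  have hYC : ∀ (i : Fin n) (k : Fin n → ℕ),
      Y i.castSucc (basisE k)
        = ((C i k : ℝ) : ℂ) • basisE (Function.update k i (k i - 1)) := by
    intro i k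
    by_cases hi : (i : ℕ) + 1 = n
    · rw [hC]; simp only [if_pos hi]; exact hY.2.1 i hi k
    · have hlt : (i : ℕ) + 1 < n := lt_of_le_of_ne i.isLt hi
      rw [hC]; simp only [if_neg hi]; exact hY.1 i hlt k
  have hC0 : ∀ (i : Fin n) (m : Fin n → ℕ), m i = 0 → C i m = 0 := by
    intro i m h
    rw [hC]; simp [h]
  have hCpos : ∀ (i : Fin n) (m : Fin n → ℕ), m i ≠ 0 → 0 < C i m := by
    intro i m h
    rw [hC]
    apply mul_pos (pow_pos hq0 _)
    apply Real.sqrt_pos.mpr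
    have : q ^ ((if (i : ℕ) + 1 = n then 4 else 2) * m i) < 1 := by
      apply pow_lt_one₀ hq0.le hq1
      have : m i ≥ 1 := Nat.one_le_iff_ne_zero.mpr h
      split <;> omega
    linarith
  have hYcomp : ∀ (i : Fin n) (v : lpH n) (k : Fin n → ℕ),
      (Y i.castSucc v) k
        = ((C i (Function.update k i (k i + 1)) : ℝ) : ℂ)
            * v (Function.update k i (k i + 1)) :=
    fun i v k => lower_comp (Y i.castSucc) i (C i) (hYC i) (hC0 i) v k
  -- the weight function
  set w : (Fin n → ℕ) → ℕ :=
    fun k => ∑ j : Fin n, if (j : ℕ) + 1 = n then 2 * k j else k j with hw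
  have hYdiag : ∀ (v : lpH n) (k : Fin n → ℕ),
      (Y (Fin.last n) v) k = (lam * (q : ℂ) ^ w k) * v k :=
    diag_comp (Y (Fin.last n)) (fun k => lam * (q : ℂ) ^ w k) (fun k => hY.2.2 k)
  have hwpos : ∀ k : Fin n → ℕ, k ≠ (fun _ => 0) → 1 ≤ w k := by
    intro k hk
    have : ∃ j, k j ≠ 0 := by
      by_contra h
      push_neg at h
      exact hk (funext fun j => h j)
    obtain ⟨j, hj⟩ := this
    calc 1 ≤ (if (j : ℕ) + 1 = n then 2 * k j else k j) := by split <;> omega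
    _ ≤ w k := by
      simp only [hw]
      exact Finset.single_le_sum (f := fun j : Fin n => if (j : ℕ) + 1 = n then 2 * k j else k j)
        (fun _ _ => Nat.zero_le _) (Finset.mem_univ j)
  have hw0 : w (fun _ => 0) = 0 := by rw [hw]; simp
  -- Step A : find u ∈ V with nonzero 0-component
  have stepA : ∃ u : lpH n, u ∈ V ∧ u (fun _ => 0) ≠ 0 := by
    obtain ⟨v, hvV, hv0⟩ := Submodule.exists_mem_ne_zero_of_ne_bot hbot
    have : ∃ k, v k ≠ 0 := by
      by_contra h
      push_neg at h
      exact hv0 (lp.eq_zero_iff_coeFn_eq_zero.mpr (funext h))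
    obtain ⟨k0, hk0⟩ := this
    have key : ∀ N : ℕ, ∀ v : lpH n, v ∈ V → ∀ k, (∑ j, k j) = N → v k ≠ 0 →
        ∃ u : lpH n, u ∈ V ∧ u (fun _ => 0) ≠ 0 := by
      intro N
      induction N with
      | zero =>
        intro v hv k hk hvk
        have hk0 : k = fun _ => 0 := funext fun j =>
          Finset.sum_eq_zero_iff.mp hk j (Finset.mem_univ j)
        exact ⟨v, hv, hk0 ▸ hvk⟩
      | succ N ih =>
        intro v hv k hk hvk
        have : ∃ i, k i ≠ 0 := by
          by_contra h
          push_neg at h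
          rw [Finset.sum_eq_zero (fun j _ => h j)] at hk
          omega
        obtain ⟨i, hi⟩ := this
        set k' := Function.update k i (k i - 1) with hk'
        have hki : Function.update k' i (k' i + 1) = k := update_update_cancel k i hi
        have hv' : (Y i.castSucc v) k' = ((C i k : ℝ) : ℂ) * v k := by
          rw [hYcomp i v k', hki]
        have hsum' : ∑ j, k' j = N := by
          have := sum_update_sub k i hi
          rw [← hk'] at this
          omega
        apply ih (Y i.castSucc v) (hVinv i.castSucc v hv).1 k' hsum'
        rw [hv']
        exact mul_ne_zero (Complex.ofReal_ne_zero.mpr (hCpos i k hi).ne') hvk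
    exact key (∑ j, k0 j) v hvV k0 rfl hk0
  obtain ⟨u, huV, hu0⟩ := stepA
  -- Step B : basisE 0 ∈ V via the limit of (lam⁻¹)^m • Y_last^m u
  have stepB : basisE (fun _ => 0) ∈ V := by
    set s : ℕ → lpH n := fun m => (fun x => Y (Fin.last n) x)^[m] u with hs
    have hstep : ∀ m, s (m + 1) = Y (Fin.last n) (s m) := fun m =>
      Function.iterate_succ_apply' _ _ _
    have hsV : ∀ m, s m ∈ V := by
      intro m
      induction m with
      | zero => simpa [hs] using huV
      | succ m ihm =>
        rw [hstep m]
        exact (hVinv (Fin.last n) _ ihm).1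
    have hscomp : ∀ m k, (s m) k = (lam * (q : ℂ) ^ w k) ^ m * u k := by
      intro m
      induction m with
      | zero => intro k; simp [hs]
      | succ m ihm =>
        intro k
        rw [hstep m, hYdiag (s m) k, ihm k, pow_succ]
        ring
    set b0 : lpH n := basisE (fun _ => 0) with hb0
    set c0 : ℂ := u (fun _ => 0) with hc0def
    set t : ℕ → lpH n := fun m => (lam⁻¹) ^ m • s m - c0 • b0 with ht
    have htb : ∀ m, ‖t m‖ ≤ q ^ m * ‖u‖ := by
      intro m
      have : ‖t m‖ ≤ ‖((q : ℂ) ^ m) • u‖ := by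
        apply lpH_norm_le
        intro k
        have htk : (t m) k = (lam⁻¹) ^ m * (s m) k - c0 * (b0 : lpH n) k := by
          rw [ht]
          simp only [lp.coeFn_sub, Pi.sub_apply]
          rw [lp.coeFn_smul, lp.coeFn_smul]
          rfl
        have hqk : (((q : ℂ) ^ m) • u) k = (q : ℂ) ^ m * u k := by
          rw [lp.coeFn_smul]; rfl
        rw [htk, hqk, hscomp m k, hb0, basisE_apply]
        by_cases hk : k = (fun _ => 0)
        · subst hk
          rw [if_pos rfl, hw0, hc0def]
          have : (lam⁻¹) ^ m * ((lam * (q:ℂ) ^ (0:ℕ)) ^ m * u (fun _ => 0))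
              - u (fun _ => 0) * 1 = 0 := by
            rw [pow_zero, mul_one, ← mul_assoc, ← mul_pow, inv_mul_cancel₀ hlam0, one_pow,
              one_mul, mul_one, sub_self]
          rw [this]
          simp [norm_nonneg]
          positivity
        · rw [if_neg hk, mul_zero, sub_zero]
          have hnorm : ‖(lam⁻¹) ^ m * ((lam * (q:ℂ) ^ w k) ^ m * u k)‖
              = (q ^ (w k)) ^ m * ‖u k‖ := by
            rw [norm_mul, norm_mul, norm_pow, norm_pow, norm_mul, norm_inv, hlam,
              inv_one, one_pow, one_mul, norm_pow, Complex.norm_real,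
              Real.norm_eq_abs, abs_of_pos hq0, one_mul]
          rw [hnorm, norm_mul, norm_pow, Complex.norm_real, Real.norm_eq_abs,
            abs_of_pos hq0]
          apply mul_le_mul_of_nonneg_right _ (norm_nonneg _)
          rw [← pow_mul]
          apply pow_le_pow_of_le_one hq0.le hq1.le
          have := hwpos k hk
          nlinarith
      rw [norm_smul, norm_pow, Complex.norm_real, Real.norm_eq_abs, abs_of_pos hq0] at this
      exact this
    have hq0' : Filter.Tendsto (fun m => q ^ m * ‖u‖) Filter.atTop (nhds 0) := by
      have := (tendsto_pow_atTop_nhds_zero_of_lt_one hq0.le hq1).mul_const ‖u‖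
      simpa using this
    have htt : Filter.Tendsto t Filter.atTop (nhds 0) :=
      squeeze_zero_norm htb hq0'
    have hst : Filter.Tendsto (fun m => (lam⁻¹) ^ m • s m) Filter.atTop (nhds (c0 • b0)) := by
      have h2 := htt.add (tendsto_const_nhds (x := c0 • b0) (f := Filter.atTop (α := ℕ)))
      rw [zero_add] at h2
      have heq : (fun m => t m + c0 • b0) = fun m => (lam⁻¹) ^ m • s m := by
        funext m
        rw [ht]
        simp [sub_add_cancel]
      rwa [heq] at h2
    have hmem : c0 • b0 ∈ V :=
      hVcl.mem_of_tendsto hst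
        (Filter.Eventually.of_forall fun m => V.smul_mem _ (hsV m))
    have hbb : b0 = c0⁻¹ • (c0 • b0) := by
      rw [smul_smul, inv_mul_cancel₀ hu0, one_smul]
    show b0 ∈ V
    rw [hbb]
    exact V.smul_mem _ hmem
  -- Step C : all basis vectors lie in V
  have stepC : ∀ k : Fin n → ℕ, basisE k ∈ V := by
    have key : ∀ N : ℕ, ∀ k : Fin n → ℕ, (∑ j, k j) = N → basisE k ∈ V := by
      intro N
      induction N with
      | zero =>
        intro k hk
        have : k = fun _ => 0 := funext fun j =>
          Finset.sum_eq_zero_iff.mp hk j (Finset.mem_univ j)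
        rw [this]; exact stepB
      | succ N ih =>
        intro k hk
        have : ∃ i, k i ≠ 0 := by
          by_contra h
          push_neg at h
          rw [Finset.sum_eq_zero (fun j _ => h j)] at hk
          omega
        obtain ⟨i, hi⟩ := this
        set k' := Function.update k i (k i - 1) with hk'
        have hki : Function.update k' i (k' i + 1) = k := update_update_cancel k i hi
        have hsum' : ∑ j, k' j = N := by
          have := sum_update_sub k i hi
          rw [← hk'] at this
          omega
        have hkV : basisE k' ∈ V := ih k' hsum'
        have hadj := (hVinv i.castSucc (basisE k') hkV).2
        rw [adj_lower (Y i.castSucc) i (C i) (hYC i) (hC0 i) k', hki] at hadj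
        have : basisE k = ((C i k : ℝ) : ℂ)⁻¹ • (((C i k : ℝ) : ℂ) • basisE k) := by
          rw [smul_smul, inv_mul_cancel₀ (Complex.ofReal_ne_zero.mpr (hCpos i k hi).ne'),
            one_smul]
        rw [this]
        exact V.smul_mem _ hadj
    exact fun k => key (∑ j, k j) k rfl
  -- Step D : conclude V = ⊤
  haveI : CompleteSpace V := hVcl.completeSpace_coe
  have horth : Vᗮ = ⊥ := by
    rw [Submodule.eq_bot_iff]
    intro x hx
    apply lp.eq_zero_iff_coeFn_eq_zero.mpr
    funext k
    have := (Submodule.mem_orthogonal V x).mp hx (basisE k) (stepC k)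
    rw [← inner_basisE k x, this]
    rfl
  calc V = Vᗮᗮ := (Submodule.orthogonal_orthogonal V).symm
  _ = (⊥ : Submodule ℂ (lpH n))ᗮ := by rw [horth]
  _ = ⊤ := Submodule.bot_orthogonal_eq_top
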